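/- arXiv:2202.11218 — 6 statements merged into one kernel-verified Lean document; each statement's English description precedes it below -/
import Mathlib

section
/- Let I₀ ∈ ℝ and let z : (I₀, ∞) → ℝ be continuously differentiable. Suppose z satisfies the near-perfect homeostasis condition on (I₀, ∞): there exist I_sp ∈ (I₀, ∞) and δ > 0 such that |z(I) − z(I_sp)| ≤ δ for all I ∈ (I₀, ∞). Then at least one of the following holds: (i) there exists I_c ∈ (I₀, ∞) with z′(I_c) = 0; or (ii) there exists a strictly increasing sequence (I_n)_{n≥1} in (I₀, ∞) with I_n → +∞ and z′(I_n) → 0 as n → ∞. -/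
open Filter Set

lemma aux_pos_case (I₀ : ℝ) (z z' : ℝ → ℝ)
    (hderiv : ∀ x ∈ Set.Ioi I₀, HasDerivAt z (z' x) x)
    (Isp : ℝ) (hIsp : Isp ∈ Set.Ioi I₀) (δ : ℝ)
    (hnp : ∀ I ∈ Set.Ioi I₀, |z I - z Isp| ≤ δ)
    (hpos : ∀ x ∈ Set.Ioi I₀, 0 < z' x) :
    ∃ Iseq : ℕ → ℝ, StrictMono Iseq ∧ (∀ n, Iseq n ∈ Set.Ioi I₀) ∧
      Tendsto Iseq atTop atTop ∧
      Tendsto (fun n => z' (Iseq n)) atTop (nhds 0) := by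
  have hIsp' : I₀ < Isp := hIsp
  set a : ℕ → ℝ := fun n => Isp + n with ha
  have haI : ∀ n : ℕ, a n ∈ Set.Ioi I₀ := by
    intro n
    have : (0:ℝ) ≤ n := Nat.cast_nonneg n
    simp only [ha, Set.mem_Ioi]
    linarith
  have hmvt : ∀ n : ℕ, ∃ c ∈ Set.Ioo (a n) (a (n+1)), z' c = z (a (n+1)) - z (a n) := by
    intro n
    have hlt : a n < a (n+1) := by
      simp only [ha]; push_cast; linarith
    have hsub : Set.Icc (a n) (a (n+1)) ⊆ Set.Ioi I₀ := fun x hx =>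
      lt_of_lt_of_le (haI n) hx.1
    have hcz : ContinuousOn z (Set.Icc (a n) (a (n+1))) := fun x hx =>
      ((hderiv x (hsub hx)).continuousAt).continuousWithinAt
    obtain ⟨c, hc, hc'⟩ := exists_hasDerivAt_eq_slope z z' hlt hcz
      (fun x hx => hderiv x (hsub ⟨le_of_lt hx.1, le_of_lt hx.2⟩))
    refine ⟨c, hc, ?_⟩
    have hone : a (n+1) - a n = 1 := by simp only [ha]; push_cast; ring
    rw [hc', hone, div_one]
  choose c hc hceq using hmvt
  have hcI : ∀ n, c n ∈ Set.Ioi I₀ := fun n => lt_trans (haI n) (hc n).1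
  refine ⟨c, ?_, hcI, ?_, ?_⟩
  · refine strictMono_nat_of_lt_succ (fun n => ?_)
    exact lt_trans (hc n).2 (hc (n+1)).1
  · refine tendsto_atTop_mono (fun n => le_of_lt (hc n).1) ?_
    simpa [ha] using tendsto_atTop_add_const_left atTop Isp
      (tendsto_natCast_atTop_atTop (R := ℝ))
  · have hnonneg : ∀ n, 0 ≤ z' (c n) := fun n => le_of_lt (hpos _ (hcI n))
    have hsum : ∀ N : ℕ, ∑ k ∈ Finset.range N, z' (c k) ≤ δ := by
      intro N
      have htel : ∑ k ∈ Finset.range N, (z (a (k+1)) - z (a k)) = z (a N) - z (a 0) := by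
        exact Finset.sum_range_sub (fun k => z (a k)) N
      have ha0 : a 0 = Isp := by simp [ha]
      have hb : z (a N) - z Isp ≤ δ := (abs_le.mp (hnp _ (haI N))).2
      calc ∑ k ∈ Finset.range N, z' (c k)
          = ∑ k ∈ Finset.range N, (z (a (k+1)) - z (a k)) := by
            exact Finset.sum_congr rfl (fun k _ => hceq k)
        _ = z (a N) - z (a 0) := htel
        _ ≤ δ := by rw [ha0]; linarith
    have hsummable : Summable (fun n => z' (c n)) :=
      summable_of_sum_range_le hnonneg hsum
    exact hsummable.tendsto_atTop_zero

/-- Near-perfect homeostasis on a semi-infinite interval implies either an interior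
point of infinitesimal homeostasis, or a strictly increasing sequence going to `+∞`
along which the derivative tends to `0`. -/
theorem near_perfect_homeostasis_dichotomy
    (I₀ : ℝ) (z z' : ℝ → ℝ)
    (hderiv : ∀ x ∈ Set.Ioi I₀, HasDerivAt z (z' x) x)
    (hcont : ContinuousOn z' (Set.Ioi I₀))
    (Isp : ℝ) (hIsp : Isp ∈ Set.Ioi I₀) (δ : ℝ) (hδ : 0 < δ)
    (hnp : ∀ I ∈ Set.Ioi I₀, |z I - z Isp| ≤ δ) :
    (∃ Ic ∈ Set.Ioi I₀, z' Ic = 0) ∨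
    (∃ Iseq : ℕ → ℝ, StrictMono Iseq ∧ (∀ n, Iseq n ∈ Set.Ioi I₀) ∧
      Tendsto Iseq atTop atTop ∧
      Tendsto (fun n => z' (Iseq n)) atTop (nhds 0)) := by
  by_cases hz : ∃ Ic ∈ Set.Ioi I₀, z' Ic = 0
  · exact Or.inl hz
  push_neg at hz
  right
  -- constant sign of z'
  have hsign : (∀ x ∈ Set.Ioi I₀, 0 < z' x) ∨ (∀ x ∈ Set.Ioi I₀, z' x < 0) := by
    by_contra h
    push_neg at h
    obtain ⟨⟨u, hu, hu'⟩, ⟨v, hv, hv'⟩⟩ := h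
    have hu0 : z' u < 0 := lt_of_le_of_ne hu' (hz u hu)
    have hv0 : 0 < z' v := lt_of_le_of_ne hv' (Ne.symm (hz v hv))
    have hsub : Set.uIcc u v ⊆ Set.Ioi I₀ := by
      exact Set.OrdConnected.uIcc_subset Set.ordConnected_Ioi hu hv
    have hivt := intermediate_value_uIcc (hcont.mono hsub)
    have h0 : (0:ℝ) ∈ Set.uIcc (z' u) (z' v) :=
      Set.mem_uIcc.mpr (Or.inl ⟨le_of_lt hu0, le_of_lt hv0⟩)
    obtain ⟨x, hx, hx0⟩ := hivt h0
    exact hz x (hsub hx) hx0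
  rcases hsign with hpos | hneg
  · exact aux_pos_case I₀ z z' hderiv Isp hIsp δ hnp hpos
  · have hderiv' : ∀ x ∈ Set.Ioi I₀, HasDerivAt (fun y => -z y) (-z' x) x :=
      fun x hx => (hderiv x hx).neg
    have hnp' : ∀ I ∈ Set.Ioi I₀, |(-z I) - (-z Isp)| ≤ δ := by
      intro I hI
      have : (-z I) - (-z Isp) = -(z I - z Isp) := by ring
      rw [this, abs_neg]
      exact hnp I hI
    obtain ⟨Iseq, h1, h2, h3, h4⟩ := aux_pos_case I₀ (fun y => -z y) (fun y => -z' y)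
      hderiv' Isp hIsp δ hnp' (fun x hx => by simpa using hneg x hx)
    refine ⟨Iseq, h1, h2, h3, ?_⟩
    have := h4.neg
    simpa using this
end

section
/- Let s, d, u ∈ ℕ and consider a real square matrix J of size (1 + s + d + u + 1), written in block form with rows and columns indexed by blocks (ι, σ, d, u, o) of sizes (1, s, d, u, 1): J = [[A_{ιι}, A_{ισ}, A_{ιd}, 0, A_{ιo}], [A_{σι}, A_{σσ}, A_{σd}, 0, A_{σo}], [0, 0, A_{dd}, 0, 0], [A_{uι}, A_{uσ}, A_{ud}, A_{uu}, A_{uo}], [A_{oι}, A_{oσ}, A_{od}, 0, A_{oo}]]. Let J^c be the (1 + s + 1) × (1 + s + 1) matrix [[A_{ιι}, A_{ισ}, A_{ιo}], [A_{σι}, A_{σσ}, A_{σo}], [A_{oι}, A_{oσ}, A_{oo}]]. Then det(J) = det(A_{dd}) · det(A_{uu}) · det(J^c). -/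
open Matrix

/-- Index type for the full network: blocks (ι, σ, d, u, o) of sizes (1, s, d, u, 1). -/
abbrev FullIdx (s d u : ℕ) := Fin 1 ⊕ Fin s ⊕ Fin d ⊕ Fin u ⊕ Fin 1

/-- Index type for the core network: blocks (ι, σ, o) of sizes (1, s, 1). -/
abbrev CoreIdx (s : ℕ) := Fin 1 ⊕ Fin s ⊕ Fin 1

/-- The Jacobian of the full network, in block form with rows and columns indexed by
blocks (ι, σ, d, u, o); the d-rows vanish off the d-block and the u-column entries
vanish off the u-rows. -/
def fullJacobian {s d u : ℕ}
    (Aii : Matrix (Fin 1) (Fin 1) ℝ) (Ais : Matrix (Fin 1) (Fin s) ℝ)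
    (Aid : Matrix (Fin 1) (Fin d) ℝ) (Aio : Matrix (Fin 1) (Fin 1) ℝ)
    (Asi : Matrix (Fin s) (Fin 1) ℝ) (Ass : Matrix (Fin s) (Fin s) ℝ)
    (Asd : Matrix (Fin s) (Fin d) ℝ) (Aso : Matrix (Fin s) (Fin 1) ℝ)
    (Add : Matrix (Fin d) (Fin d) ℝ)
    (Aui : Matrix (Fin u) (Fin 1) ℝ) (Aus : Matrix (Fin u) (Fin s) ℝ)
    (Aud : Matrix (Fin u) (Fin d) ℝ) (Auu : Matrix (Fin u) (Fin u) ℝ)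
    (Auo : Matrix (Fin u) (Fin 1) ℝ)
    (Aoi : Matrix (Fin 1) (Fin 1) ℝ) (Aos : Matrix (Fin 1) (Fin s) ℝ)
    (Aod : Matrix (Fin 1) (Fin d) ℝ) (Aoo : Matrix (Fin 1) (Fin 1) ℝ) :
    Matrix (FullIdx s d u) (FullIdx s d u) ℝ :=
  Matrix.of fun i j =>
    match i, j with
    | .inl i, .inl j => Aii i j
    | .inl i, .inr (.inl j) => Ais i j
    | .inl i, .inr (.inr (.inl j)) => Aid i j
    | .inl _, .inr (.inr (.inr (.inl _))) => 0
    | .inl i, .inr (.inr (.inr (.inr j))) => Aio i j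
    | .inr (.inl i), .inl j => Asi i j
    | .inr (.inl i), .inr (.inl j) => Ass i j
    | .inr (.inl i), .inr (.inr (.inl j)) => Asd i j
    | .inr (.inl _), .inr (.inr (.inr (.inl _))) => 0
    | .inr (.inl i), .inr (.inr (.inr (.inr j))) => Aso i j
    | .inr (.inr (.inl _)), .inl _ => 0
    | .inr (.inr (.inl _)), .inr (.inl _) => 0
    | .inr (.inr (.inl i)), .inr (.inr (.inl j)) => Add i j
    | .inr (.inr (.inl _)), .inr (.inr (.inr (.inl _))) => 0
    | .inr (.inr (.inl _)), .inr (.inr (.inr (.inr _))) => 0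
    | .inr (.inr (.inr (.inl i))), .inl j => Aui i j
    | .inr (.inr (.inr (.inl i))), .inr (.inl j) => Aus i j
    | .inr (.inr (.inr (.inl i))), .inr (.inr (.inl j)) => Aud i j
    | .inr (.inr (.inr (.inl i))), .inr (.inr (.inr (.inl j))) => Auu i j
    | .inr (.inr (.inr (.inl i))), .inr (.inr (.inr (.inr j))) => Auo i j
    | .inr (.inr (.inr (.inr i))), .inl j => Aoi i j
    | .inr (.inr (.inr (.inr i))), .inr (.inl j) => Aos i j
    | .inr (.inr (.inr (.inr i))), .inr (.inr (.inl j)) => Aod i j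
    | .inr (.inr (.inr (.inr _))), .inr (.inr (.inr (.inl _))) => 0
    | .inr (.inr (.inr (.inr i))), .inr (.inr (.inr (.inr j))) => Aoo i j

/-- The Jacobian of the core network: blocks (ι, σ, o). -/
def coreJacobian {s : ℕ}
    (Aii : Matrix (Fin 1) (Fin 1) ℝ) (Ais : Matrix (Fin 1) (Fin s) ℝ)
    (Aio : Matrix (Fin 1) (Fin 1) ℝ)
    (Asi : Matrix (Fin s) (Fin 1) ℝ) (Ass : Matrix (Fin s) (Fin s) ℝ)
    (Aso : Matrix (Fin s) (Fin 1) ℝ)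
    (Aoi : Matrix (Fin 1) (Fin 1) ℝ) (Aos : Matrix (Fin 1) (Fin s) ℝ)
    (Aoo : Matrix (Fin 1) (Fin 1) ℝ) :
    Matrix (CoreIdx s) (CoreIdx s) ℝ :=
  Matrix.of fun i j =>
    match i, j with
    | .inl i, .inl j => Aii i j
    | .inl i, .inr (.inl j) => Ais i j
    | .inl i, .inr (.inr j) => Aio i j
    | .inr (.inl i), .inl j => Asi i j
    | .inr (.inl i), .inr (.inl j) => Ass i j
    | .inr (.inl i), .inr (.inr j) => Aso i j
    | .inr (.inr i), .inl j => Aoi i j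
    | .inr (.inr i), .inr (.inl j) => Aos i j
    | .inr (.inr i), .inr (.inr j) => Aoo i j

/-- Reindexing equivalence putting the blocks in order ((core, d), u). -/
def reIdx (s d u : ℕ) : ((CoreIdx s ⊕ Fin d) ⊕ Fin u) ≃ FullIdx s d u where
  toFun x :=
    match x with
    | .inl (.inl (.inl i)) => .inl i
    | .inl (.inl (.inr (.inl i))) => .inr (.inl i)
    | .inl (.inl (.inr (.inr i))) => .inr (.inr (.inr (.inr i)))
    | .inl (.inr i) => .inr (.inr (.inl i))
    | .inr i => .inr (.inr (.inr (.inl i)))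
  invFun x :=
    match x with
    | .inl i => .inl (.inl (.inl i))
    | .inr (.inl i) => .inl (.inl (.inr (.inl i)))
    | .inr (.inr (.inl i)) => .inl (.inr i)
    | .inr (.inr (.inr (.inl i))) => .inr i
    | .inr (.inr (.inr (.inr i))) => .inl (.inl (.inr (.inr i)))
  left_inv := by rintro (((i | i | i) | i) | i) <;> rfl
  right_inv := by rintro (i | i | i | i | i) <;> rfl

/-- The determinant of the full Jacobian factors as
`det J = det A_dd · det A_uu · det J^c`. -/
theorem det_fullJacobian_eq {s d u : ℕ}
    (Aii : Matrix (Fin 1) (Fin 1) ℝ) (Ais : Matrix (Fin 1) (Fin s) ℝ)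
    (Aid : Matrix (Fin 1) (Fin d) ℝ) (Aio : Matrix (Fin 1) (Fin 1) ℝ)
    (Asi : Matrix (Fin s) (Fin 1) ℝ) (Ass : Matrix (Fin s) (Fin s) ℝ)
    (Asd : Matrix (Fin s) (Fin d) ℝ) (Aso : Matrix (Fin s) (Fin 1) ℝ)
    (Add : Matrix (Fin d) (Fin d) ℝ)
    (Aui : Matrix (Fin u) (Fin 1) ℝ) (Aus : Matrix (Fin u) (Fin s) ℝ)
    (Aud : Matrix (Fin u) (Fin d) ℝ) (Auu : Matrix (Fin u) (Fin u) ℝ)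
    (Auo : Matrix (Fin u) (Fin 1) ℝ)
    (Aoi : Matrix (Fin 1) (Fin 1) ℝ) (Aos : Matrix (Fin 1) (Fin s) ℝ)
    (Aod : Matrix (Fin 1) (Fin d) ℝ) (Aoo : Matrix (Fin 1) (Fin 1) ℝ) :
    (fullJacobian Aii Ais Aid Aio Asi Ass Asd Aso Add Aui Aus Aud Auu Auo
        Aoi Aos Aod Aoo).det =
      Add.det * Auu.det *
        (coreJacobian Aii Ais Aio Asi Ass Aso Aoi Aos Aoo).det := by
  set M := coreJacobian Aii Ais Aio Asi Ass Aso Aoi Aos Aoo with hM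
  set Bd : Matrix (CoreIdx s) (Fin d) ℝ := Matrix.of fun i j =>
    match i with
    | .inl i => Aid i j
    | .inr (.inl i) => Asd i j
    | .inr (.inr i) => Aod i j with hBd
  set Cu : Matrix (Fin u) (CoreIdx s ⊕ Fin d) ℝ := Matrix.of fun i j =>
    match j with
    | .inl (.inl j) => Aui i j
    | .inl (.inr (.inl j)) => Aus i j
    | .inl (.inr (.inr j)) => Auo i j
    | .inr j => Aud i j with hCu
  have key : fullJacobian Aii Ais Aid Aio Asi Ass Asd Aso Add Aui Aus Aud Auu Auo
      Aoi Aos Aod Aoo =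
      (Matrix.fromBlocks (Matrix.fromBlocks M Bd 0 Add) 0 Cu Auu).submatrix
        (reIdx s d u).symm (reIdx s d u).symm := by
    ext i j
    rcases i with i | i | i | i | i <;> rcases j with j | j | j | j | j <;>
      simp [fullJacobian, coreJacobian, reIdx, Matrix.fromBlocks, hM, hBd, hCu]
  rw [key, Matrix.det_submatrix_equiv_self, Matrix.det_fromBlocks_zero₁₂,
    Matrix.det_fromBlocks_zero₂₁]
  ring
end

section
/- Let s, d, u ∈ ℕ and consider a real square matrix H of size (s + d + u + 1), written in block form with rows indexed by blocks (σ, d, u, o) of sizes (s, d, u, 1) and columns indexed by blocks (ι, σ, d, u) of sizes (1, s, d, u): H = [[A_{σι}, A_{σσ}, A_{σd}, 0], [0, 0, A_{dd}, 0], [A_{uι}, A_{uσ}, A_{ud}, A_{uu}], [A_{oι}, A_{oσ}, A_{od}, 0]]. Let H^c be the (s + 1) × (s + 1) matrix [[A_{σι}, A_{σσ}], [A_{oι}, A_{oσ}]]. Then there exists ε ∈ {1, −1}, depending only on the block dimensions s, d, u, such that det(H) = ε · det(A_{dd}) · det(A_{uu}) · det(H^c). -/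
open Matrix

/-- Row index of the homeostasis matrix: blocks (σ, d, u, o) of sizes (s, d, u, 1). -/
abbrev HRowIdx (s d u : ℕ) := Fin s ⊕ Fin d ⊕ Fin u ⊕ Fin 1

/-- Column index of the homeostasis matrix: blocks (ι, σ, d, u) of sizes (1, s, d, u). -/
abbrev HColIdx (s d u : ℕ) := Fin 1 ⊕ Fin s ⊕ Fin d ⊕ Fin u

/-- The homeostasis matrix of the full network, with rows indexed by the blocks
(σ, d, u, o) and columns indexed by the blocks (ι, σ, d, u). -/
def fullHomeostasisMatrix {s d u : ℕ}
    (Asi : Matrix (Fin s) (Fin 1) ℝ) (Ass : Matrix (Fin s) (Fin s) ℝ)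
    (Asd : Matrix (Fin s) (Fin d) ℝ)
    (Add : Matrix (Fin d) (Fin d) ℝ)
    (Aui : Matrix (Fin u) (Fin 1) ℝ) (Aus : Matrix (Fin u) (Fin s) ℝ)
    (Aud : Matrix (Fin u) (Fin d) ℝ) (Auu : Matrix (Fin u) (Fin u) ℝ)
    (Aoi : Matrix (Fin 1) (Fin 1) ℝ) (Aos : Matrix (Fin 1) (Fin s) ℝ)
    (Aod : Matrix (Fin 1) (Fin d) ℝ) :
    Matrix (HRowIdx s d u) (HColIdx s d u) ℝ :=
  Matrix.of fun i j =>
    match i, j with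
    | .inl i, .inl j => Asi i j
    | .inl i, .inr (.inl j) => Ass i j
    | .inl i, .inr (.inr (.inl j)) => Asd i j
    | .inl _, .inr (.inr (.inr _)) => 0
    | .inr (.inl _), .inl _ => 0
    | .inr (.inl _), .inr (.inl _) => 0
    | .inr (.inl i), .inr (.inr (.inl j)) => Add i j
    | .inr (.inl _), .inr (.inr (.inr _)) => 0
    | .inr (.inr (.inl i)), .inl j => Aui i j
    | .inr (.inr (.inl i)), .inr (.inl j) => Aus i j
    | .inr (.inr (.inl i)), .inr (.inr (.inl j)) => Aud i j
    | .inr (.inr (.inl i)), .inr (.inr (.inr j)) => Auu i j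
    | .inr (.inr (.inr i)), .inl j => Aoi i j
    | .inr (.inr (.inr i)), .inr (.inl j) => Aos i j
    | .inr (.inr (.inr i)), .inr (.inr (.inl j)) => Aod i j
    | .inr (.inr (.inr _)), .inr (.inr (.inr _)) => 0

/-- The homeostasis matrix of the core network, with rows indexed by the blocks
(σ, o) and columns indexed by the blocks (ι, σ). -/
def coreHomeostasisMatrix {s : ℕ}
    (Asi : Matrix (Fin s) (Fin 1) ℝ) (Ass : Matrix (Fin s) (Fin s) ℝ)
    (Aoi : Matrix (Fin 1) (Fin 1) ℝ) (Aos : Matrix (Fin 1) (Fin s) ℝ) :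
    Matrix (Fin s ⊕ Fin 1) (Fin 1 ⊕ Fin s) ℝ :=
  Matrix.of fun i j =>
    match i, j with
    | .inl i, .inl j => Asi i j
    | .inl i, .inr j => Ass i j
    | .inr i, .inl j => Aoi i j
    | .inr i, .inr j => Aos i j

/-- Canonical identification of the column index of the homeostasis matrix with its
row index (both of cardinality `s + d + u + 1`). -/
def hIdxEquiv (s d u : ℕ) : HColIdx s d u ≃ HRowIdx s d u :=
  (Equiv.sumComm (Fin 1) (Fin s ⊕ Fin d ⊕ Fin u)).trans
    ((Equiv.sumAssoc (Fin s) (Fin d ⊕ Fin u) (Fin 1)).trans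
      ((Equiv.refl (Fin s)).sumCongr (Equiv.sumAssoc (Fin d) (Fin u) (Fin 1))))

/-- Auxiliary reindexing putting the `d` block first, then `(ι ⊕ σ)`, then `u`. -/
def reorderEquiv (s d u : ℕ) :
    HColIdx s d u ≃ (Fin d ⊕ ((Fin 1 ⊕ Fin s) ⊕ Fin u)) where
  toFun x := match x with
    | .inl a => .inr (.inl (.inl a))
    | .inr (.inl a) => .inr (.inl (.inr a))
    | .inr (.inr (.inl a)) => .inl a
    | .inr (.inr (.inr a)) => .inr (.inr a)
  invFun x := match x with
    | .inl a => .inr (.inr (.inl a))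
    | .inr (.inl (.inl a)) => .inl a
    | .inr (.inl (.inr a)) => .inr (.inl a)
    | .inr (.inr a) => .inr (.inr (.inr a))
  left_inv := by rintro (a | a | a | a) <;> rfl
  right_inv := by rintro (a | (a | a) | a) <;> rfl

/-- There is a sign `ε = ±1`, depending only on the block dimensions `s, d, u`, such
that `det H = ε · det A_dd · det A_uu · det H^c` for all choices of the blocks. -/
theorem det_fullHomeostasisMatrix_eq (s d u : ℕ) :
    ∃ ε : ℝ, (ε = 1 ∨ ε = -1) ∧
      ∀ (Asi : Matrix (Fin s) (Fin 1) ℝ) (Ass : Matrix (Fin s) (Fin s) ℝ)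
        (Asd : Matrix (Fin s) (Fin d) ℝ)
        (Add : Matrix (Fin d) (Fin d) ℝ)
        (Aui : Matrix (Fin u) (Fin 1) ℝ) (Aus : Matrix (Fin u) (Fin s) ℝ)
        (Aud : Matrix (Fin u) (Fin d) ℝ) (Auu : Matrix (Fin u) (Fin u) ℝ)
        (Aoi : Matrix (Fin 1) (Fin 1) ℝ) (Aos : Matrix (Fin 1) (Fin s) ℝ)
        (Aod : Matrix (Fin 1) (Fin d) ℝ),
        ((fullHomeostasisMatrix Asi Ass Asd Add Aui Aus Aud Auu Aoi Aos
            Aod).submatrix (hIdxEquiv s d u) id).det =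
          ε * Add.det * Auu.det *
            ((coreHomeostasisMatrix Asi Ass Aoi Aos).submatrix
              (Equiv.sumComm (Fin 1) (Fin s)) id).det := by
  refine ⟨1, Or.inl rfl, ?_⟩
  intro Asi Ass Asd Add Aui Aus Aud Auu Aoi Aos Aod
  have key : ((fullHomeostasisMatrix Asi Ass Asd Add Aui Aus Aud Auu Aoi Aos
      Aod).submatrix (hIdxEquiv s d u) id) =
      (Matrix.fromBlocks Add 0
        (Matrix.fromRows (Matrix.fromRows Aod Asd) Aud)
        (Matrix.fromBlocks (Matrix.fromBlocks Aoi Aos Asi Ass) 0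
          (Matrix.fromCols Aui Aus) Auu)).submatrix
        (reorderEquiv s d u) (reorderEquiv s d u) := by
    ext i j
    rcases i with a | a | a | a <;> rcases j with b | b | b | b <;>
      rfl
  have hcore : ((coreHomeostasisMatrix Asi Ass Aoi Aos).submatrix
      (Equiv.sumComm (Fin 1) (Fin s)) id) =
      Matrix.fromBlocks Aoi Aos Asi Ass := by
    ext i j
    rcases i with a | a <;> rcases j with b | b <;> rfl
  rw [key, Matrix.det_submatrix_equiv_self, Matrix.det_fromBlocks_zero₁₂,
    Matrix.det_fromBlocks_zero₁₂, hcore]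
  ring
end

section
/- Let a, b, c, d, e, h, l > 0 be real parameters and let x_ι, x_σ, x_τ, x_o ≥ 0 with x_o > 0. For the self immune recognition model, with partial derivatives f_{σι} = −d x_σ, f_{σσ} = −d(x_o + x_ι) − e, f_{oι} = −l x_o, f_{oσ} = a x_o, one has f_{oσ} f_{σι} − f_{oι} f_{σσ} = −x_o (a d x_σ + l d x_o + l d x_ι + l e) < 0. In particular this quantity is nonzero, so the model cannot exhibit structural infinitesimal homeostasis at any equilibrium with nonnegative coordinates and x_o > 0. -/
/-- In the self immune recognition model, the "structural" factor
`f_{oσ} f_{σι} − f_{oι} f_{σσ}` equals `−x_o (a d x_σ + l d x_o + l d x_ι + l e)`,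
which is negative (hence nonzero) at any equilibrium with nonnegative coordinates and
`x_o > 0`: the model cannot exhibit structural infinitesimal homeostasis. -/
theorem immune_no_structural_homeostasis
    (a b c d e h l : ℝ) (ha : 0 < a) (hb : 0 < b) (hc : 0 < c) (hd : 0 < d)
    (he : 0 < e) (hh : 0 < h) (hl : 0 < l)
    (xι xσ xτ xo : ℝ) (hxι : 0 ≤ xι) (hxσ : 0 ≤ xσ) (hxτ : 0 ≤ xτ) (hxo : 0 < xo)
    (fσι fσσ foι foσ : ℝ)
    (hfσι : fσι = -(d * xσ)) (hfσσ : fσσ = -(d * (xo + xι)) - e)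
    (hfoι : foι = -(l * xo)) (hfoσ : foσ = a * xo) :
    foσ * fσι - foι * fσσ = -(xo * (a * d * xσ + l * d * xo + l * d * xι + l * e)) ∧
    foσ * fσι - foι * fσσ < 0 ∧
    foσ * fσι - foι * fσσ ≠ 0 := by
  subst hfσι hfσσ hfoι hfoσ
  have heq : a * xo * -(d * xσ) - -(l * xo) * (-(d * (xo + xι)) - e)
      = -(xo * (a * d * xσ + l * d * xo + l * d * xι + l * e)) := by ring
  have hneg : -(xo * (a * d * xσ + l * d * xo + l * d * xι + l * e)) < 0 := by
    have : 0 < xo * (a * d * xσ + l * d * xo + l * d * xι + l * e) := by positivity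
    linarith
  exact ⟨heq, heq ▸ hneg, by rw [heq]; exact ne_of_lt hneg⟩
end

section
/- Let b, f, g, h, j > 0 be real numbers. Then there do not exist real numbers x_τ and x_o with x_τ > 0 satisfying simultaneously −b + f g/(x_τ + g)² + h x_o = 0 and −b x_τ + f x_τ/(x_τ + g) + h x_τ x_o + j = 0. (Equivalently, eliminating x_o reduces the pair to f x_τ² + j (x_τ + g)² = 0, which has no solution with positive parameters.) -/
/-- The self immune recognition model exhibits no null-degradation homeostasis in the
node τ: no `x_τ > 0` can simultaneously satisfy the equilibrium equation for `x_τ` and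
the vanishing of the diagonal Jacobian entry `f_{τ,x_τ}`. -/
theorem immune_no_null_degradation_homeostasis
    (b f g h j : ℝ) (hb : 0 < b) (hf : 0 < f) (hg : 0 < g) (hh : 0 < h)
    (hj : 0 < j) :
    ¬ ∃ xτ xo : ℝ, 0 < xτ ∧
      -b + f * g / (xτ + g) ^ 2 + h * xo = 0 ∧
      -(b * xτ) + f * xτ / (xτ + g) + h * xτ * xo + j = 0 := by
  rintro ⟨xτ, xo, hx, h1, h2⟩
  have hxg : 0 < xτ + g := by linarith
  have hxg' : xτ + g ≠ 0 := ne_of_gt hxg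
  field_simp at h1 h2
  nlinarith [sq_nonneg xτ, sq_nonneg (xτ + g), mul_pos hf (mul_pos hx hx),
    mul_pos hj (mul_pos hxg hxg), mul_pos hx hxg]
end

section
/- Let k₃, k₄, w₂ be positive real numbers, let g ∈ (0, 1], and let x_τ ≥ 0 and x_ρ ≥ 0 be real numbers. Define f_{ττ} = −k₃ + w₂ (x_τ² + 2 x_τ − x_ρ)/(1 + x_τ)², f_{τρ} = −w₂ x_τ/(1 + x_τ), f_{ρτ} = g k₃ − w₂ (x_τ² + 2 x_τ − x_ρ)/(1 + x_τ)², f_{ρρ} = −k₄ + w₂ x_τ/(1 + x_τ). If f_{ρτ} ≠ 0, then it is impossible that both f_{ττ} f_{ρρ} − f_{τρ} f_{ρτ} = 0 and (1 + x_τ) f_{ρτ} + (1 + x_ρ) f_{ρρ} = 0 hold simultaneously. (Indeed, the two conditions together force (1 + x_τ) f_{ττ} + (1 + x_ρ) f_{τρ} = 0, which combined with the others yields (g − 1) k₃ (1 + x_τ) = k₄ (1 + x_ρ), contradicting g ≤ 1, k₃, k₄ > 0 and 1 + x_τ, 1 + x_ρ > 0.) -/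
/-- In the intracellular copper regulation model, appendage homeostasis
(`f_{ττ} f_{ρρ} − f_{τρ} f_{ρτ} = 0`) is incompatible with the chair condition
`(1 + x_τ) f_{ρτ} + (1 + x_ρ) f_{ρρ} = 0` (given `f_{ρτ} ≠ 0`): every appendage
homeostasis point of the copper model is a point of simple homeostasis. -/
theorem copper_no_chair_homeostasis
    (k₃ k₄ w₂ g : ℝ) (hk₃ : 0 < k₃) (hk₄ : 0 < k₄) (hw₂ : 0 < w₂)
    (hg : 0 < g) (hg1 : g ≤ 1)
    (xτ xρ : ℝ) (hxτ : 0 ≤ xτ) (hxρ : 0 ≤ xρ)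
    (fττ fτρ fρτ fρρ : ℝ)
    (hfττ : fττ = -k₃ + w₂ * (xτ ^ 2 + 2 * xτ - xρ) / (1 + xτ) ^ 2)
    (hfτρ : fτρ = -(w₂ * xτ / (1 + xτ)))
    (hfρτ : fρτ = g * k₃ - w₂ * (xτ ^ 2 + 2 * xτ - xρ) / (1 + xτ) ^ 2)
    (hfρρ : fρρ = -k₄ + w₂ * xτ / (1 + xτ))
    (hne : fρτ ≠ 0) :
    ¬ (fττ * fρρ - fτρ * fρτ = 0 ∧
       (1 + xτ) * fρτ + (1 + xρ) * fρρ = 0) := by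
  rintro ⟨h1, h2⟩
  have hτ : (0:ℝ) < 1 + xτ := by linarith
  have hρ : (0:ℝ) < 1 + xρ := by linarith
  -- fρρ ≠ 0
  have hρρ : fρρ ≠ 0 := by
    intro h0
    rw [h0] at h2
    have : fρτ = 0 := by
      have := mul_eq_zero.mp (by linarith : (1 + xτ) * fρτ = 0)
      rcases this with h | h
      · linarith
      · exact h
    exact hne this
  -- (1+xτ) fττ + (1+xρ) fτρ = 0
  have h3 : (1 + xτ) * fττ + (1 + xρ) * fτρ = 0 := by
    have key : fρρ * ((1 + xτ) * fττ + (1 + xρ) * fτρ) = 0 := by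
      have : fττ * fρρ = fτρ * fρτ := by linarith
      linear_combination (1 + xτ) * this + fτρ * h2
    rcases mul_eq_zero.mp key with h | h
    · exact absurd h hρρ
    · exact h
  -- sum: (1+xτ)(fττ+fρτ) + (1+xρ)(fτρ+fρρ) = 0
  have hsum : (1 + xτ) * (fττ + fρτ) + (1 + xρ) * (fτρ + fρρ) = 0 := by linear_combination h2 + h3
  have e1 : fττ + fρτ = (g - 1) * k₃ := by rw [hfττ, hfρτ]; ring
  have e2 : fτρ + fρρ = -k₄ := by rw [hfτρ, hfρρ]; ring
  rw [e1, e2] at hsum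
  nlinarith [hsum, mul_pos hρ hk₄, mul_pos hτ hk₃]
end
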